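/- Two RLFTSs N and N′ are fluid trace equivalent if and only if they are logically equivalent in HML_flt, i.e. N ≡fl N′ iff for every formula Φ of HML_flt and all lists ς over ℝ_{>0} and ϱ over ℝ, ⟦Φ⟧_N(s₀,ς,ϱ) = ⟦Φ⟧_{N′}(s₀′,ς,ϱ). -/

import Mathlib

open scoped BigOperators

/-- A rated labeled fluid transition system (RLFTS) over a type `Act` of actions. -/
structure RLFTS (Act : Type) where
  S : Type
  E : Type
  s0 : S
  src : E → S
  tgt : E → S
  rate : E → ℝ
  label : E → Act
  RP : S → ℝ
  rate_pos : ∀ e, 0 < rate e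
  out_finite : ∀ s : S, {e : E | src e = s}.Finite
  out_nonempty : ∀ s : S, ∃ e : E, src e = s

namespace RLFTS

variable {Act : Type}

/-- Exit rate of a state. -/
noncomputable def RE (N : RLFTS Act) (s : N.S) : ℝ :=
  ∑ᶠ e ∈ {e : N.E | N.src e = s}, N.rate e

/-- Average sojourn time in a state. -/
noncomputable def SJ (N : RLFTS Act) (s : N.S) : ℝ := 1 / N.RE s

/-- Firing probability of an edge. -/
noncomputable def PTe (N : RLFTS Act) (e : N.E) : ℝ := N.rate e / N.RE (N.src e)

/-- `IsPathFrom N M es` : the list of edges `es` is a path starting in the state `M`. -/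
def IsPathFrom (N : RLFTS Act) : N.S → List N.E → Prop
  | _, [] => True
  | M, e :: es => N.src e = M ∧ IsPathFrom N (N.tgt e) es

/-- The list of states visited by a path starting in `M`. -/
def visits (N : RLFTS Act) : N.S → List N.E → List N.S
  | M, [] => [M]
  | M, e :: es => M :: visits N (N.tgt e) es

/-- Execution probability of a path. -/
noncomputable def pathPT (N : RLFTS Act) (es : List N.E) : ℝ := (es.map N.PTe).prod

/-- Cumulative execution probability of the `(σ,ς,ϱ)`-selected paths starting in `M`. -/
noncomputable def PTsel (N : RLFTS Act) (M : N.S) (σ : List Act) (ς ϱ : List ℝ) : ℝ :=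
  ∑ᶠ es ∈ {es : List N.E | IsPathFrom N M es ∧ es.map N.label = σ ∧
      (visits N M es).map N.SJ = ς ∧ (visits N M es).map N.RP = ϱ}, N.pathPT es

end RLFTS

namespace RLFTS

/-- The RLFTSs `N` and `N'` are fluid trace equivalent: the cumulative probabilities of the
`(σ,ς,ϱ)`-selected paths from the initial states coincide for every triple `(σ,ς,ϱ)` of lists
over `Act`, `ℝ_{>0}` and `ℝ`. -/
def FluidTraceEquiv {Act : Type} (N N' : RLFTS Act) : Prop :=
  ∀ (σ : List Act) (ς ϱ : List ℝ), (∀ x ∈ ς, 0 < x) →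
    N.PTsel N.s0 σ ς ϱ = N'.PTsel N'.s0 σ ς ϱ

end RLFTS

/-- Formulas of the fluid modal logic `HML_flt`: `Φ ::= ⊤ | ⟨a⟩Φ`. -/
inductive HMLflt (Act : Type) : Type
  | top : HMLflt Act
  | dia : Act → HMLflt Act → HMLflt Act

open Classical in
/-- Interpretation `⟦Φ⟧(M,ς,ϱ)` of a formula of `HML_flt` at a state `M` of an RLFTS with
a sojourn-time list `ς` and a fluid-rate list `ϱ`. -/
noncomputable def interpFlt {Act : Type} (N : RLFTS Act) :
    HMLflt Act → N.S → List ℝ → List ℝ → ℝ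
  | .top, M, ς, ϱ => if ς = [N.SJ M] ∧ ϱ = [N.RP M] then 1 else 0
  | .dia a Φ, M, s :: ς, r :: ϱ =>
      if N.SJ M = s ∧ N.RP M = r then
        ∑ᶠ e ∈ {e : N.E | N.src e = M ∧ N.label e = a},
          N.PTe e * interpFlt N Φ (N.tgt e) ς ϱ
      else 0
  | .dia _ _, _, _, _ => 0

namespace HMLflt

/-- The action sequence of a formula. -/
def toList {Act : Type} : HMLflt Act → List Act
  | .top => []
  | .dia a Φ => a :: toList Φ

/-- The formula corresponding to an action sequence. -/
def ofList {Act : Type} : List Act → HMLflt Act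
  | [] => .top
  | a :: σ => .dia a (ofList σ)

lemma toList_ofList {Act : Type} (σ : List Act) : (ofList σ).toList = σ := by
  induction σ with
  | nil => rfl
  | cons a σ ih => simp [ofList, toList, ih]

end HMLflt

namespace RLFTS

variable {Act : Type} (N : RLFTS Act)

/-- The set of `(σ,ς,ϱ)`-selected paths from `M`. -/
def selSet (M : N.S) (σ : List Act) (ς ϱ : List ℝ) : Set (List N.E) :=
  {es : List N.E | IsPathFrom N M es ∧ es.map N.label = σ ∧
      (visits N M es).map N.SJ = ς ∧ (visits N M es).map N.RP = ϱ}

lemma PTsel_eq (M : N.S) (σ : List Act) (ς ϱ : List ℝ) :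
    N.PTsel M σ ς ϱ = ∑ᶠ es ∈ selSet N M σ ς ϱ, N.pathPT es := rfl

lemma pathsFinite (n : ℕ) :
    ∀ M : N.S, {es : List N.E | IsPathFrom N M es ∧ es.length = n}.Finite := by
  induction n with
  | zero =>
    intro M
    refine Set.Finite.subset (Set.finite_singleton ([] : List N.E)) ?_
    rintro es ⟨_, h⟩
    simp [List.length_eq_zero_iff.mp h]
  | succ n ih =>
    intro M
    have hsub : {es : List N.E | IsPathFrom N M es ∧ es.length = n + 1} ⊆
        ⋃ e ∈ {e : N.E | N.src e = M},
          (e :: ·) '' {es | IsPathFrom N (N.tgt e) es ∧ es.length = n} := by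
      rintro es ⟨hp, hl⟩
      cases es with
      | nil => simp at hl
      | cons e es =>
        obtain ⟨h1, h2⟩ := hp
        simp only [Set.mem_iUnion, Set.mem_image]
        exact ⟨e, h1, es, ⟨h2, by simpa using hl⟩, rfl⟩
    exact Set.Finite.subset
      (Set.Finite.biUnion (N.out_finite M) fun e _ => (ih (N.tgt e)).image _) hsub

lemma selSet_finite (M : N.S) (σ : List Act) (ς ϱ : List ℝ) :
    (selSet N M σ ς ϱ).Finite := by
  refine Set.Finite.subset (N.pathsFinite σ.length M) ?_
  rintro es ⟨hp, hl, -, -⟩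
  exact ⟨hp, by rw [← hl, List.length_map]⟩

lemma selSet_nil_left (M : N.S) (σ : List Act) (ϱ : List ℝ) :
    selSet N M σ [] ϱ = ∅ := by
  ext es
  simp only [Set.mem_empty_iff_false, iff_false, selSet, Set.mem_setOf_eq]
  rintro ⟨-, -, hs, -⟩
  cases es <;> simp [visits] at hs

lemma selSet_nil_right (M : N.S) (σ : List Act) (ς : List ℝ) :
    selSet N M σ ς [] = ∅ := by
  ext es
  simp only [Set.mem_empty_iff_false, iff_false, selSet, Set.mem_setOf_eq]
  rintro ⟨-, -, -, hr⟩
  cases es <;> simp [visits] at hr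

lemma selSet_head (M : N.S) {σ : List Act} {s r : ℝ} {ς ϱ : List ℝ} {es : List N.E}
    (h : es ∈ selSet N M σ (s :: ς) (r :: ϱ)) : N.SJ M = s ∧ N.RP M = r := by
  obtain ⟨-, -, hs, hr⟩ := h
  cases es <;> simp [visits] at hs hr <;> exact ⟨hs.1, hr.1⟩

lemma selSet_cons (M : N.S) (a : Act) (σ : List Act) (s r : ℝ) (ς ϱ : List ℝ)
    (h1 : N.SJ M = s) (h2 : N.RP M = r) :
    selSet N M (a :: σ) (s :: ς) (r :: ϱ) =
      ⋃ e ∈ {e : N.E | N.src e = M ∧ N.label e = a},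
        (e :: ·) '' selSet N (N.tgt e) σ ς ϱ := by
  ext es
  simp only [Set.mem_iUnion, Set.mem_image, Set.mem_setOf_eq]
  constructor
  · rintro ⟨hp, hl, hs, hr⟩
    cases es with
    | nil => simp at hl
    | cons e es =>
      obtain ⟨he1, he2⟩ := hp
      simp only [visits, List.map_cons, List.cons.injEq] at hs hr hl
      exact ⟨e, ⟨he1, hl.1⟩, es, ⟨he2, hl.2, hs.2, hr.2⟩, rfl⟩
  · rintro ⟨e, ⟨he1, he2⟩, es', ⟨hp, hl, hs, hr⟩, rfl⟩
    refine ⟨⟨he1, hp⟩, ?_, ?_, ?_⟩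
    · simp [hl, he2]
    · simp only [visits, List.map_cons, he1]
      rw [hs, h1]
    · simp only [visits, List.map_cons, he1]
      rw [hr, h2]

lemma mul_finsum_mem {α : Type*} {s : Set α} (hs : s.Finite) (c : ℝ) (f : α → ℝ) :
    ∑ᶠ i ∈ s, c * f i = c * ∑ᶠ i ∈ s, f i := by
  rw [← hs.coe_toFinset, finsum_mem_coe_finset, finsum_mem_coe_finset, Finset.mul_sum]

/-- Key lemma: the interpretation of a formula equals the cumulative probability of the
selected paths for its action sequence. -/
lemma interp_eq_PTsel (Φ : HMLflt Act) : ∀ (M : N.S) (ς ϱ : List ℝ),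
    interpFlt N Φ M ς ϱ = N.PTsel M Φ.toList ς ϱ := by
  induction Φ with
  | top =>
    intro M ς ϱ
    rw [PTsel_eq]
    have hset : selSet N M ([] : List Act) ς ϱ =
        if ς = [N.SJ M] ∧ ϱ = [N.RP M] then ({[]} : Set (List N.E)) else ∅ := by
      ext es
      simp only [selSet, Set.mem_setOf_eq, List.map_eq_nil_iff]
      constructor
      · rintro ⟨hp, hl, hs, hr⟩
        subst hl
        simp only [visits, List.map_cons, List.map_nil] at hs hr
        simp [← hs, ← hr]
      · intro hes
        split_ifs at hes with hc
        · simp only [Set.mem_singleton_iff] at hes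
          subst hes
          exact ⟨trivial, rfl, by simp [visits, hc.1], by simp [visits, hc.2]⟩
        · simp at hes
    rw [show HMLflt.top.toList = ([] : List Act) from rfl, hset, interpFlt]
    split_ifs
    · rw [finsum_mem_singleton]; simp [pathPT]
    · rw [finsum_mem_empty]
  | dia a Φ ih =>
    intro M ς ϱ
    match ς, ϱ with
    | [], ϱ =>
      rw [PTsel_eq, HMLflt.toList, selSet_nil_left, finsum_mem_empty]
      rfl
    | s :: ς, [] =>
      rw [PTsel_eq, HMLflt.toList, selSet_nil_right, finsum_mem_empty]
      rfl
    | s :: ς, r :: ϱ =>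
      rw [PTsel_eq, HMLflt.toList, interpFlt]
      split_ifs with hc
      · rw [selSet_cons N M a Φ.toList s r ς ϱ hc.1 hc.2]
        have hC : {e : N.E | N.src e = M ∧ N.label e = a}.Finite :=
          (N.out_finite M).subset fun e he => he.1
        have hdisj : {e : N.E | N.src e = M ∧ N.label e = a}.PairwiseDisjoint
            (fun e => (e :: ·) '' selSet N (N.tgt e) Φ.toList ς ϱ) := by
          intro e _ e' _ hne
          refine Set.disjoint_left.mpr ?_
          rintro x ⟨u, -, rfl⟩ ⟨v, -, hv⟩
          exact hne (List.head_eq_of_cons_eq hv.symm)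
        rw [finsum_mem_biUnion hdisj hC
          (fun e _ => (N.selSet_finite (N.tgt e) Φ.toList ς ϱ).image _)]
        refine finsum_mem_congr rfl fun e he => ?_
        rw [finsum_mem_image (fun u _ v _ h => List.tail_eq_of_cons_eq h)]
        have h1 : ∑ᶠ j ∈ selSet N (N.tgt e) Φ.toList ς ϱ, N.pathPT (e :: j) =
            ∑ᶠ j ∈ selSet N (N.tgt e) Φ.toList ς ϱ, N.PTe e * N.pathPT j :=
          finsum_mem_congr rfl fun j _ => by simp [pathPT]
        rw [h1, mul_finsum_mem (N.selSet_finite (N.tgt e) Φ.toList ς ϱ), ih, PTsel_eq]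
      · have hempty : selSet N M (a :: Φ.toList) (s :: ς) (r :: ϱ) = ∅ := by
          ext es
          simp only [Set.mem_empty_iff_false, iff_false]
          intro hes
          exact hc (N.selSet_head M hes)
        rw [hempty, finsum_mem_empty]

end RLFTS

/-- Logical characterization of fluid trace equivalence: `N ≡fl N'` iff `N` and `N'` satisfy
the same formulas of `HML_flt` with the same interpretation values at their initial states. -/
theorem RLFTS.fluidTraceEquiv_iff_HMLflt {Act : Type} (N N' : RLFTS Act) :
    RLFTS.FluidTraceEquiv N N' ↔
      ∀ (Φ : HMLflt Act) (ς ϱ : List ℝ), (∀ x ∈ ς, 0 < x) →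
        interpFlt N Φ N.s0 ς ϱ = interpFlt N' Φ N'.s0 ς ϱ := by
  constructor
  · intro h Φ ς ϱ hς
    rw [N.interp_eq_PTsel, N'.interp_eq_PTsel]
    exact h Φ.toList ς ϱ hς
  · intro h σ ς ϱ hς
    have := h (HMLflt.ofList σ) ς ϱ hς
    rwa [N.interp_eq_PTsel, N'.interp_eq_PTsel, HMLflt.toList_ofList] at this
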